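/- Let s ∈ ℂ and define the sequence (w_k)_{k≥1} by the recursion δ_{k,1} = -(s/(2(2k+1)) + 1/2) w_{k+1} + ∑_{n=0}^{k-1} w_{k-n}/((2n+1)(2n+3)) for k = 1, 2, ..., with w_1 arbitrary. Then the generating function Υ(t) = ∑_{k≥1} w_k t^{2k-1}/(2k-1) satisfies the ODE 0 = t² + (s/2)(Υ(t)/t - w_1) - w_1/2 - (1/(4t)) Υ'(t)(t²-1) log((1+t)/(1-t)) as an identity of formal power series in t. -/

import Mathlib

/-- Shift of a power series: `shift f = f/t` when `f` has zero constant term. -/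
noncomputable def shift (f : PowerSeries ℂ) : PowerSeries ℂ :=
  PowerSeries.mk fun m => PowerSeries.coeff (m + 1) f

/-- Formal derivative of a power series. -/
noncomputable def dSer (f : PowerSeries ℂ) : PowerSeries ℂ :=
  PowerSeries.mk fun m => ((m : ℂ) + 1) * PowerSeries.coeff (m + 1) f

/-- The generating function `Υ(t) = ∑_{k≥1} w_k t^{2k-1}/(2k-1)`. -/
noncomputable def Ups (w : ℕ → ℂ) : PowerSeries ℂ :=
  PowerSeries.mk fun m => if Odd m then w ((m + 1) / 2) / (m : ℂ) else 0

/-- The power series `log((1+t)/(1-t)) = 2 ∑_{n≥0} t^{2n+1}/(2n+1)`. -/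
noncomputable def LserC : PowerSeries ℂ :=
  PowerSeries.mk fun m => if Odd m then 2 / (m : ℂ) else 0

lemma coeff_shift (f : PowerSeries ℂ) (m : ℕ) :
    PowerSeries.coeff m (shift f) = PowerSeries.coeff (m+1) f := by
  simp [shift]

lemma coeff_LserC (m : ℕ) :
    PowerSeries.coeff m LserC = if Odd m then 2 / (m : ℂ) else 0 := by
  simp [LserC]

lemma natcast_succ_ne (m : ℕ) : ((m : ℂ) + 1) ≠ 0 := by
  have : ((m + 1 : ℕ) : ℂ) ≠ 0 := by exact_mod_cast Nat.succ_ne_zero m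
  push_cast at this; exact this

lemma coeff_D (w : ℕ → ℂ) (m : ℕ) :
    PowerSeries.coeff m (dSer (Ups w)) = if Even m then w (m/2 + 1) else 0 := by
  simp only [dSer, Ups, PowerSeries.coeff_mk]
  by_cases h : Even m
  · have h1 : Odd (m + 1) := Even.add_one h
    simp only [h1, if_pos, h, if_pos]
    have h2 : (m + 1 + 1) / 2 = m / 2 + 1 := by omega
    rw [h2]
    push_cast
    rw [mul_div_cancel₀ _ (natcast_succ_ne m)]
  · have h1 : ¬ Odd (m + 1) := by
      rw [Nat.odd_iff]; rw [Nat.not_even_iff] at h; omega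
    simp [h1, h]

def Qc (w : ℕ → ℂ) (m : ℕ) : ℂ :=
  if m = 0 then -w 1 else if Even m then w (m/2) - w (m/2+1) else 0

lemma coeff_Q (w : ℕ → ℂ) (m : ℕ) :
    PowerSeries.coeff m (dSer (Ups w) * (PowerSeries.X^2 - 1)) = Qc w m := by
  rw [mul_sub, mul_one, map_sub, PowerSeries.coeff_mul_X_pow', coeff_D, coeff_D]
  match m with
  | 0 => simp [Qc]
  | 1 => simp [Qc]
  | (m+2) =>
    have h2 : 2 ≤ m + 2 := by omega
    have he : Even (m+2) ↔ Even m := by simp [Nat.even_add]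
    have hd : (m+2)/2 = m/2 + 1 := by omega
    by_cases h : Even m
    · simp [Qc, h2, he.mpr h, h, hd, Nat.add_sub_cancel]
    · simp [Qc, h2, he, h, Nat.add_sub_cancel]

lemma sum_range_two_mul (f : ℕ → ℂ) (k : ℕ) :
    ∑ j ∈ Finset.range (2*k), f j = ∑ n ∈ Finset.range k, (f (2*n) + f (2*n+1)) := by
  induction k with
  | zero => simp
  | succ k ih =>
    have h : 2*(k+1) = 2*k + 1 + 1 := by ring
    rw [h, Finset.sum_range_succ, Finset.sum_range_succ, ih, Finset.sum_range_succ]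
    ring

lemma coeff_P (w : ℕ → ℂ) (N : ℕ) :
    PowerSeries.coeff N (dSer (Ups w) * (PowerSeries.X^2 - 1) * LserC) =
      ∑ j ∈ Finset.range (N+1), Qc w j * (if Odd (N-j) then 2 / ((N-j : ℕ) : ℂ) else 0) := by
  rw [PowerSeries.coeff_mul, Finset.Nat.sum_antidiagonal_eq_sum_range_succ_mk]
  refine Finset.sum_congr rfl fun j hj => ?_
  rw [coeff_Q, coeff_LserC]

lemma coeff_P_even (w : ℕ → ℂ) (N : ℕ) (hN : Even N) :
    PowerSeries.coeff N (dSer (Ups w) * (PowerSeries.X^2 - 1) * LserC) = 0 := by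
  rw [coeff_P]
  refine Finset.sum_eq_zero fun j hj => ?_
  rcases Nat.even_or_odd j with hj2 | hj2
  · have hle : j ≤ N := by simpa using Nat.lt_succ_iff.mp (Finset.mem_range.mp hj)
    have : ¬ Odd (N - j) := by
      rw [Nat.odd_iff]
      obtain ⟨a, ha⟩ := hN; obtain ⟨b, hb⟩ := hj2
      omega
    simp [this]
  · have h0 : j ≠ 0 := by rintro rfl; exact (Nat.not_odd_iff_even.mpr Even.zero) hj2
    have : Qc w j = 0 := by simp [Qc, h0, Nat.not_even_iff_odd.mpr hj2]
    simp [this]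

lemma coeff_P_odd (w : ℕ → ℂ) (k : ℕ) :
    PowerSeries.coeff (2*k+1) (dSer (Ups w) * (PowerSeries.X^2 - 1) * LserC) =
      (∑ j ∈ Finset.range k, (w (k-j) - w (k-j+1)) * (2/((2*j+1 : ℕ) : ℂ)))
        + (-w 1) * (2/((2*k+1 : ℕ) : ℂ)) := by
  rw [coeff_P]
  have h1 : 2*k+1+1 = 2*(k+1) := by ring
  rw [h1, sum_range_two_mul]
  have h2 : ∀ n ∈ Finset.range (k+1),
      (Qc w (2*n) * (if Odd (2*k+1-(2*n)) then 2/((2*k+1-(2*n) : ℕ):ℂ) else 0)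
        + Qc w (2*n+1) * (if Odd (2*k+1-(2*n+1)) then 2/((2*k+1-(2*n+1) : ℕ):ℂ) else 0))
      = Qc w (2*n) * (2/((2*(k-n)+1 : ℕ):ℂ)) := by
    intro n hn
    have hn' : n ≤ k := by have := Finset.mem_range.mp hn; omega
    have hq : Qc w (2*n+1) = 0 := by
      have h : ¬ Even (2*n+1) := by
        rw [Nat.not_even_iff]; omega
      simp [Qc, h]
    have hsub : 2*k+1-(2*n) = 2*(k-n)+1 := by omega
    have hodd : Odd (2*(k-n)+1) := ⟨k-n, by ring⟩
    rw [hq, hsub]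
    simp [hodd]
  rw [Finset.sum_congr rfl h2]
  have h3 := Finset.sum_range_reflect (fun n => Qc w (2*n) * (2/((2*(k-n)+1 : ℕ):ℂ))) (k+1)
  rw [← h3]
  simp only [Nat.add_sub_cancel]
  rw [Finset.sum_range_succ]
  congr 1
  · refine Finset.sum_congr rfl fun j hj => ?_
    have hj' : j < k := Finset.mem_range.mp hj
    have e1 : k - (k - j) = j := by omega
    have e2 : k - j ≠ 0 := by omega
    have e3 : Even (2*(k-j)) := ⟨k-j, by ring⟩
    have e4 : 2*(k-j) ≠ 0 := by omega
    have e5 : (2*(k-j))/2 = k - j := by omega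
    rw [e1]
    simp [Qc, e4, e3, e5]
  · have hkk : k - k = 0 := by omega
    rw [hkk]
    simp [Qc]

lemma coeff_Ups (w : ℕ → ℂ) (m : ℕ) :
    PowerSeries.coeff m (Ups w) = if Odd m then w ((m + 1) / 2) / (m : ℂ) else 0 := by
  simp [Ups]


/-- If `(w_k)` satisfies the recursion
`δ_{k,1} = -(s/(2(2k+1)) + 1/2) w_{k+1} + ∑_{n=0}^{k-1} w_{k-n}/((2n+1)(2n+3))`,
then `Υ(t) = ∑_{k≥1} w_k t^{2k-1}/(2k-1)` satisfies the formal power series ODE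
`0 = t² + (s/2)(Υ/t - w₁) - w₁/2 - (1/(4t)) Υ'(t)(t²-1) log((1+t)/(1-t))`,
where division by `t` is the coefficient shift (the numerators have zero
constant term). -/
theorem stmt18 (s : ℂ) (w : ℕ → ℂ)
    (hrec : ∀ k : ℕ, 1 ≤ k →
      (if k = 1 then (1 : ℂ) else 0) =
        -(s / (2 * (2 * (k : ℂ) + 1)) + 1 / 2) * w (k + 1) +
          ∑ n ∈ Finset.range k,
            w (k - n) / ((2 * (n : ℂ) + 1) * (2 * (n : ℂ) + 3))) :
    (0 : PowerSeries ℂ) =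
      PowerSeries.X ^ 2
        + PowerSeries.C (s / 2) * (shift (Ups w) - PowerSeries.C (w 1))
        - PowerSeries.C (w 1 / 2)
        - PowerSeries.C (1 / 4) *
            shift (dSer (Ups w) * (PowerSeries.X ^ 2 - 1) * LserC) := by
  rw [PowerSeries.ext_iff]
  intro m
  simp only [map_add, map_sub, PowerSeries.coeff_C_mul, PowerSeries.coeff_X_pow,
    PowerSeries.coeff_C, coeff_shift, coeff_Ups, map_zero]
  rcases Nat.even_or_odd m with he | ho
  · -- m even
    obtain ⟨a, ha⟩ := he
    have hm : m = 2 * a := by omega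
    subst hm
    rcases Nat.eq_zero_or_pos a with rfl | hk
    · -- a = 0
      norm_num [coeff_P_odd w 0]
      ring
    · -- a ≥ 1
      have h1 : Odd (2*a + 1) := ⟨a, by ring⟩
      have h2 : (2*a + 1 + 1)/2 = a + 1 := by omega
      have h3 : ¬ (2*a = 0) := by omega
      have h4 : ((if 2*a = 2 then (1:ℂ) else 0)) = (if a = 1 then (1:ℂ) else 0) := by
        by_cases h : a = 1 <;> simp [h] <;> omega
      rw [coeff_P_odd w a, if_pos h1, if_neg h3, if_neg h3, h4, h2, hrec a hk]
      push_cast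
      have hd1 : ∀ n : ℕ, (2*(n:ℂ)+1) ≠ 0 := fun n => by
        have h : ((2*n+1 : ℕ) : ℂ) ≠ 0 := Nat.cast_ne_zero.mpr (by omega)
        push_cast at h; exact h
      have hd2 : ∀ n : ℕ, (2*(n:ℂ)+3) ≠ 0 := fun n => by
        have h : ((2*n+3 : ℕ) : ℂ) ≠ 0 := Nat.cast_ne_zero.mpr (by omega)
        push_cast at h; exact h
      have key : (∑ n ∈ Finset.range a, w (a-n) / ((2*(n:ℂ)+1)*(2*(n:ℂ)+3)))
          - 1/4 * (∑ n ∈ Finset.range a, (w (a-n) - w (a-n+1)) * (2/(2*(n:ℂ)+1)))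
          = (1/2) * (w (a-0+1) / (2*((0:ℕ):ℂ)+1))
            - (1/2) * (w (a-a+1) / (2*((a:ℕ):ℂ)+1)) := by
        rw [Finset.mul_sum, ← Finset.sum_sub_distrib]
        calc (∑ n ∈ Finset.range a, (w (a-n) / ((2*(n:ℂ)+1)*(2*(n:ℂ)+3))
                - 1/4 * ((w (a-n) - w (a-n+1)) * (2/(2*(n:ℂ)+1)))))
            = ∑ n ∈ Finset.range a, ((1/2) * (w (a-n+1) / (2*((n:ℕ):ℂ)+1))
                - (1/2) * (w (a-(n+1)+1) / (2*((n+1:ℕ):ℂ)+1))) := by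
              refine Finset.sum_congr rfl fun n hn => ?_
              have hn' : n < a := Finset.mem_range.mp hn
              have e : a - (n+1) + 1 = a - n := by omega
              rw [e]
              push_cast
              have d1 := hd1 n
              have d2 := hd2 n
              have d3 : (2*((n:ℂ)+1)+1) ≠ 0 := by
                intro hc; exact d2 (by linear_combination hc)
              field_simp
              ring
          _ = (1/2) * (w (a-0+1) / (2*((0:ℕ):ℂ)+1))
                - (1/2) * (w (a-a+1) / (2*((a:ℕ):ℂ)+1)) :=
              Finset.sum_range_sub' (fun n : ℕ => (1/2) * (w (a-n+1) / (2*((n:ℕ):ℂ)+1))) a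
      have e0 : a - 0 + 1 = a + 1 := by omega
      have e1 : a - a + 1 = 1 := by omega
      rw [e0, e1] at key
      push_cast at key
      have hne : (2*(a:ℂ)+1) ≠ 0 := hd1 a
      set S := ∑ n ∈ Finset.range a, w (a-n) / ((2*(n:ℂ)+1)*(2*(n:ℂ)+3)) with hS
      set T := ∑ n ∈ Finset.range a, (w (a-n) - w (a-n+1)) * (2/(2*(n:ℂ)+1)) with hT
      have hS2 : S = 1/4*T + (1/2 * w (a+1) - 1/2 * (w 1 / (2*(a:ℂ)+1))) := by
        linear_combination key
      rw [hS2]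
      have hdd : s / (2 * (2 * (a:ℂ) + 1)) = s / 2 / (2 * (a:ℂ) + 1) := (div_div s 2 _).symm
      rw [hdd]
      ring
  · -- m odd
    obtain ⟨a, ha⟩ := ho
    subst ha
    have h1 : ¬ Odd (2*a + 1 + 1) := by rw [Nat.odd_iff]; omega
    have h2 : ¬ (2*a + 1 = 2) := by omega
    have h3 : ¬ (2*a + 1 = 0) := by omega
    have h4 : Even (2*a + 1 + 1) := ⟨a+1, by ring⟩
    rw [coeff_P_even w _ h4]
    simp [h1, h2, h3]
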